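/- Let μ be a monotone measure on a finite nonempty set X and f : X → ℝ. Then the Choquet integral with respect to the dual measure μ̄ satisfies ∫ f dμ̄ = ∑_{∅ ≠ B ⊆ X} M_μ(B) · max_{x ∈ B} f(x), where M_μ is the Möbius transform of μ. -/
import Mathlib


open Finset

/-- The set `{x*_k, …, x*_{n-1}}` (0-indexed): the image under the enumeration `e`
of the indices `≥ k`. -/
def upSet {X : Type*} [DecidableEq X] {n : ℕ} (e : Fin n ≃ X) (k : ℕ) : Finset X :=
  (Finset.univ.filter fun j : Fin n => k ≤ (j : ℕ)).image e

/-- The Choquet integral of `f` with respect to the set function `μ`, computed via an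
enumeration `e : Fin n ≃ X` (assumed to sort `f` nondecreasingly):
`∑ i, f(x*_i) · [μ(A*_i) − μ(A*_{i+1})]` where `A*_i = {x*_i, …, x*_{n-1}}`
(note `A*_n = ∅`, and `μ ∅ = 0` for a monotone measure). -/
def choquetSum {X : Type*} [DecidableEq X] {n : ℕ} (μ : Finset X → ℝ) (f : X → ℝ)
    (e : Fin n ≃ X) : ℝ :=
  ∑ i : Fin n, f (e i) * (μ (upSet e i) - μ (upSet e ((i : ℕ) + 1)))

/-- The dual measure `μ̄(A) := μ(X) − μ(X \ A)`. -/
def dualMeasure {X : Type*} [Fintype X] [DecidableEq X] (μ : Finset X → ℝ) :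
    Finset X → ℝ :=
  fun A => μ Finset.univ - μ (Finset.univ \ A)

/-- The Möbius transform `M_μ(B) := ∑_{A ⊆ B} (−1)^{|B|−|A|} μ(A)`. -/
def mobius {X : Type*} (μ : Finset X → ℝ) (B : Finset X) : ℝ :=
  ∑ A ∈ B.powerset, (-1 : ℝ) ^ (B.card - A.card) * μ A

lemma mem_upSet {X : Type*} [DecidableEq X] {n : ℕ} (e : Fin n ≃ X) (k : ℕ) (x : X) :
    x ∈ upSet e k ↔ k ≤ (e.symm x : ℕ) := by
  simp only [upSet, mem_image, mem_filter, mem_univ, true_and]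
  constructor
  · rintro ⟨j, hj, rfl⟩; simpa using hj
  · intro h; exact ⟨e.symm x, h, e.apply_symm_apply x⟩

lemma neg_one_pow_sum {X : Type*} [DecidableEq X] (x : Finset X) :
    ∑ m ∈ x.powerset, (-1 : ℝ) ^ m.card = if x = ∅ then 1 else 0 := by
  have h := Finset.sum_powerset_neg_one_pow_card (x := x)
  have h2 : ((∑ m ∈ x.powerset, (-1 : ℤ) ^ m.card : ℤ) : ℝ)
      = ∑ m ∈ x.powerset, (-1 : ℝ) ^ m.card := by push_cast; rfl
  rw [← h2, h]
  split <;> simp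

lemma mobius_inversion {X : Type*} [DecidableEq X] (μ : Finset X → ℝ) (C : Finset X) :
    ∑ B ∈ C.powerset, mobius μ B = μ C := by
  have step1 : ∀ B ∈ C.powerset, mobius μ B
      = ∑ A ∈ C.powerset, if A ⊆ B then (-1 : ℝ) ^ (B.card - A.card) * μ A else 0 := by
    intro B hB
    rw [mem_powerset] at hB
    rw [Finset.sum_ite, Finset.sum_const_zero, add_zero]
    unfold mobius
    apply Finset.sum_congr
    · ext A
      simp only [mem_powerset, mem_filter]
      exact ⟨fun h => ⟨h.trans hB, h⟩, fun h => h.2⟩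
    · intros; rfl
  rw [Finset.sum_congr rfl step1, Finset.sum_comm]
  have step2 : ∀ A ∈ C.powerset,
      (∑ B ∈ C.powerset, if A ⊆ B then (-1 : ℝ) ^ (B.card - A.card) * μ A else 0)
      = (if A = C then 1 else 0) * μ A := by
    intro A hA
    rw [mem_powerset] at hA
    rw [Finset.sum_ite, Finset.sum_const_zero, add_zero]
    have hb : ∑ B ∈ C.powerset.filter (fun B => A ⊆ B), (-1 : ℝ) ^ (B.card - A.card) * μ A
        = ∑ D ∈ (C \ A).powerset, (-1 : ℝ) ^ D.card * μ A := by
      apply Finset.sum_nbij' (i := fun B => B \ A) (j := fun D => A ∪ D)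
      · intro B hB
        simp only [mem_filter, mem_powerset] at hB
        exact mem_powerset.2 (sdiff_subset_sdiff hB.1 (Finset.Subset.refl A))
      · intro D hD
        rw [mem_powerset] at hD
        simp only [mem_filter, mem_powerset]
        exact ⟨Finset.union_subset hA (hD.trans Finset.sdiff_subset), Finset.subset_union_left⟩
      · intro B hB
        simp only [mem_filter, mem_powerset] at hB
        exact Finset.union_sdiff_of_subset hB.2
      · intro D hD
        rw [mem_powerset] at hD
        exact Finset.union_sdiff_cancel_left
          (Finset.disjoint_of_subset_right hD Finset.disjoint_sdiff)
      · intro B hB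
        simp only [mem_filter, mem_powerset] at hB
        rw [Finset.card_sdiff_of_subset hB.2]
    rw [hb, ← Finset.sum_mul, neg_one_pow_sum]
    have hiff : (C \ A = ∅) ↔ (A = C) := by
      rw [Finset.sdiff_eq_empty_iff_subset]
      exact ⟨fun h => Finset.Subset.antisymm hA h, fun h => h ▸ Finset.Subset.refl _⟩
    rw [if_congr hiff rfl rfl]
  rw [Finset.sum_congr rfl step2,
    Finset.sum_eq_single_of_mem C (mem_powerset_self C) (fun b _ hb => by rw [if_neg hb, zero_mul])]
  rw [if_pos rfl, one_mul]

lemma dual_expand {X : Type*} [Fintype X] [DecidableEq X] (μ : Finset X → ℝ)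
    (A : Finset X) :
    dualMeasure μ A = ∑ B ∈ (Finset.univ : Finset X).powerset,
      mobius μ B * (if (B ∩ A).Nonempty then 1 else 0) := by
  unfold dualMeasure
  rw [← mobius_inversion μ Finset.univ, ← mobius_inversion μ (Finset.univ \ A)]
  have h : ∑ B ∈ (Finset.univ \ A : Finset X).powerset, mobius μ B
      = ∑ B ∈ (Finset.univ : Finset X).powerset,
          if (B ∩ A).Nonempty then 0 else mobius μ B := by
    rw [Finset.sum_ite, Finset.sum_const_zero, zero_add]
    refine Finset.sum_congr ?_ (fun x _ => rfl)
    ext B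
    simp only [mem_powerset, mem_filter, Finset.subset_sdiff,
      Finset.not_nonempty_iff_eq_empty, ← Finset.disjoint_iff_inter_eq_empty]
  rw [h, ← Finset.sum_sub_distrib]
  apply Finset.sum_congr rfl
  intro B _
  split <;> ring

/-- `∫ f dμ̄ = ∑_{∅ ≠ B ⊆ X} M_μ(B) · max_{x ∈ B} f(x)`, where `μ̄` is the
dual measure and `M_μ` the Möbius transform of `μ`. -/
theorem choquet_integral_dual_eq_mobius_max
    {X : Type*} [Fintype X] [DecidableEq X] {n : ℕ} (hn : 0 < n)
    (μ : Finset X → ℝ) (hμ_empty : μ ∅ = 0)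
    (hμ_mono : ∀ A B : Finset X, A ⊆ B → μ A ≤ μ B)
    (f : X → ℝ) (e : Fin n ≃ X) (hsort : Monotone (f ∘ e)) :
    choquetSum (dualMeasure μ) f e =
      ∑ B ∈ (Finset.univ : Finset X).powerset,
        if hB : B.Nonempty then mobius μ B * B.sup' hB f else 0 := by
  classical
  unfold choquetSum
  have expand : ∀ i : Fin n,
      f (e i) * (dualMeasure μ (upSet e i) - dualMeasure μ (upSet e ((i : ℕ) + 1)))
      = ∑ B ∈ (Finset.univ : Finset X).powerset,
          mobius μ B * (f (e i) *
            ((if (B ∩ upSet e i).Nonempty then (1:ℝ) else 0)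
              - (if (B ∩ upSet e ((i : ℕ) + 1)).Nonempty then 1 else 0))) := by
    intro i
    rw [dual_expand, dual_expand, ← Finset.sum_sub_distrib, Finset.mul_sum]
    apply Finset.sum_congr rfl
    intro B _
    ring
  rw [Finset.sum_congr rfl (fun i _ => expand i), Finset.sum_comm]
  apply Finset.sum_congr rfl
  intro B _
  by_cases hB : B.Nonempty
  · rw [dif_pos hB]
    have hBne : (B.image e.symm).Nonempty := hB.image _
    set m : Fin n := (B.image e.symm).max' hBne with hm
    have hinter : ∀ k : ℕ, (B ∩ upSet e k).Nonempty ↔ k ≤ (m : ℕ) := by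
      intro k
      constructor
      · rintro ⟨x, hx⟩
        rw [Finset.mem_inter, mem_upSet] at hx
        calc k ≤ (e.symm x : ℕ) := hx.2
          _ ≤ (m : ℕ) := by
            exact_mod_cast Fin.le_iff_val_le_val.1
              (Finset.le_max' _ _ (Finset.mem_image_of_mem _ hx.1))
      · intro hk
        obtain ⟨x, hx, hxm⟩ := Finset.mem_image.1 (Finset.max'_mem _ hBne)
        exact ⟨x, Finset.mem_inter.2 ⟨hx, (mem_upSet e k x).2 (by rw [hxm]; exact hk)⟩⟩
    have hcoef : ∀ i : Fin n,
        ((if (B ∩ upSet e i).Nonempty then (1:ℝ) else 0)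
          - (if (B ∩ upSet e ((i : ℕ) + 1)).Nonempty then 1 else 0))
        = if i = m then 1 else 0 := by
      intro i
      rw [if_congr (hinter i) rfl rfl, if_congr (hinter ((i : ℕ) + 1)) rfl rfl]
      by_cases he : i = m
      · subst he
        rw [if_pos rfl, if_pos (le_refl _), if_neg (by omega)]
        norm_num
      · rw [if_neg he]
        have hne : (i : ℕ) ≠ (m : ℕ) := fun h => he (Fin.ext h)
        by_cases h1 : (i : ℕ) ≤ (m : ℕ)
        · rw [if_pos h1, if_pos (by omega)]; norm_num
        · rw [if_neg h1, if_neg (by omega)]; norm_num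
    have hsum : ∑ i : Fin n,
        mobius μ B * (f (e i) *
          ((if (B ∩ upSet e i).Nonempty then (1:ℝ) else 0)
            - (if (B ∩ upSet e ((i : ℕ) + 1)).Nonempty then 1 else 0)))
        = mobius μ B * f (e m) := by
      rw [← Finset.mul_sum]
      congr 1
      rw [Finset.sum_congr rfl (fun i _ => by rw [hcoef i])]
      simp
    rw [hsum]
    congr 1
    -- f (e m) = B.sup' hB f
    have hmem : e m ∈ B := by
      obtain ⟨x, hx, hxm⟩ := Finset.mem_image.1 (Finset.max'_mem _ hBne)
      rw [hm, ← hxm, e.apply_symm_apply]; exact hx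
    apply le_antisymm
    · exact Finset.le_sup' f hmem
    · apply Finset.sup'_le
      intro x hx
      have : e.symm x ≤ m := Finset.le_max' _ _ (Finset.mem_image_of_mem _ hx)
      have := hsort this
      simpa using this
  · rw [dif_neg hB]
    apply Finset.sum_eq_zero
    intro i _
    rw [Finset.not_nonempty_iff_eq_empty] at hB
    simp [hB]
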